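/- arXiv:1602.00458 — 3 statements merged into one kernel-verified Lean document; each statement's English description precedes it below -/
import Mathlib

section
/- Let K, s be natural numbers, N an integer with 0 ≤ N, and β : Fin K → ℤ → (Fin s → ℤ) → Prop a family of predicates forming a partition, i.e. for every x : ℤ and every u : Fin s → ℤ there is exactly one l : Fin K with β l x u. Let z : Fin K → ℕ. Then the following are equivalent: (A) there exists a function a : ℤ → (Fin s → ℤ) such that for every l : Fin K, the cardinality of {x : ℤ | 0 ≤ x ∧ x < N ∧ β l x (a x)} equals z l; (B) there exists w : Fin K → Finset (Fin K) → ℕ such that (i) for every S : Finset (Fin K), the cardinality of {x : ℤ | 0 ≤ x ∧ x < N ∧ {l : Fin K | ∃ u, β l x u} = ↑S} equals the sum over l ∈ S of w l S, and (ii) for every l : Fin K, z l equals the sum over all S : Finset (Fin K) with l ∈ S of w l S. -/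
open Finset

private lemma distribute {α γ : Type*} [DecidableEq α] [DecidableEq γ] [Nonempty γ]
    (t : Finset γ) :
    ∀ (s : Finset α) (c : γ → ℕ), s.card = ∑ b ∈ t, c b →
    ∃ g : α → γ, (∀ x ∈ s, g x ∈ t) ∧ ∀ b ∈ t, (s.filter (fun x => g x = b)).card = c b := by
  induction t using Finset.induction with
  | empty =>
    intro s c h
    simp only [Finset.sum_empty, Finset.card_eq_zero] at h
    subst h
    exact ⟨fun _ => Classical.arbitrary γ, by simp, by simp⟩
  | @insert b t' hb ih =>
    intro s c h
    rw [Finset.sum_insert hb] at h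
    obtain ⟨s₁, hs₁sub, hs₁card⟩ := Finset.exists_subset_card_eq (s := s) (n := c b) (by omega)
    have hsd : (s \ s₁).card = ∑ b' ∈ t', c b' := by
      rw [Finset.card_sdiff_of_subset hs₁sub]; omega
    obtain ⟨g', hg'mem, hg'card⟩ := ih (s \ s₁) c hsd
    refine ⟨fun x => if x ∈ s₁ then b else g' x, ?_, ?_⟩
    · intro x hx
      by_cases hx1 : x ∈ s₁
      · simp [hx1]
      · simp only [if_neg hx1]
        exact Finset.mem_insert_of_mem (hg'mem x (Finset.mem_sdiff.mpr ⟨hx, hx1⟩))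
    · intro b' hb'
      rcases Finset.mem_insert.mp hb' with rfl | hb't
      · have hfe : s.filter (fun x => (if x ∈ s₁ then b' else g' x) = b') = s₁ := by
          ext x
          simp only [Finset.mem_filter]
          constructor
          · rintro ⟨hxs, hxe⟩
            by_contra hx1
            rw [if_neg hx1] at hxe
            exact hb (hxe ▸ hg'mem x (Finset.mem_sdiff.mpr ⟨hxs, hx1⟩))
          · intro hx1
            exact ⟨hs₁sub hx1, if_pos hx1⟩
        rw [hfe, hs₁card]
      · have hne : b ≠ b' := fun h => hb (h ▸ hb't)
        have hfe : s.filter (fun x => (if x ∈ s₁ then b else g' x) = b')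
            = (s \ s₁).filter (fun x => g' x = b') := by
          ext x
          simp only [Finset.mem_filter, Finset.mem_sdiff]
          constructor
          · rintro ⟨hxs, hxe⟩
            by_cases hx1 : x ∈ s₁
            · rw [if_pos hx1] at hxe; exact absurd hxe hne
            · rw [if_neg hx1] at hxe; exact ⟨⟨hxs, hx1⟩, hxe⟩
          · rintro ⟨⟨hxs, hx1⟩, hxe⟩
            exact ⟨hxs, by rw [if_neg hx1]; exact hxe⟩
        rw [hfe, hg'card b' hb't]

theorem stmt_1 (K s : ℕ) (N : ℤ) (hN : 0 ≤ N)
    (β : Fin K → ℤ → (Fin s → ℤ) → Prop)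
    (hpart : ∀ (x : ℤ) (u : Fin s → ℤ), ∃! l : Fin K, β l x u)
    (z : Fin K → ℕ) :
    (∃ a : ℤ → (Fin s → ℤ),
        ∀ l : Fin K, Set.ncard {x : ℤ | 0 ≤ x ∧ x < N ∧ β l x (a x)} = z l) ↔
      (∃ w : Fin K → Finset (Fin K) → ℕ,
        (∀ S : Finset (Fin K),
            Set.ncard {x : ℤ | 0 ≤ x ∧ x < N ∧ {l : Fin K | ∃ u, β l x u} = ↑S} =
              ∑ l ∈ S, w l S) ∧
        (∀ l : Fin K,
            z l = ∑ S ∈ Finset.univ.filter (fun S : Finset (Fin K) => l ∈ S), w l S)) := by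
  classical
  have hK : Nonempty (Fin K) := ⟨(hpart 0 (fun _ => 0)).exists.choose⟩
  set I : Finset ℤ := Finset.Ico 0 N with hI
  have hconv : ∀ (P : ℤ → Prop) (_ : DecidablePred P),
      Set.ncard {x : ℤ | 0 ≤ x ∧ x < N ∧ P x} = (I.filter P).card := by
    intro P _
    rw [← Set.ncard_coe_finset]
    congr 1
    ext x
    simp [hI, Finset.mem_Ico, and_assoc]
  set T : ℤ → Finset (Fin K) := fun x => Finset.univ.filter (fun l => ∃ u, β l x u) with hT
  have hTset : ∀ (x : ℤ) (S : Finset (Fin K)), ({l : Fin K | ∃ u, β l x u} = ↑S) ↔ T x = S := by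
    intro x S
    rw [← Finset.coe_inj, hT]
    constructor
    · intro h; rw [← h]; ext l; simp
    · intro h; rw [← h]; ext l; simp
  have hconv2 : ∀ S : Finset (Fin K),
      Set.ncard {x : ℤ | 0 ≤ x ∧ x < N ∧ {l : Fin K | ∃ u, β l x u} = ↑S}
        = (I.filter (fun x => T x = S)).card := by
    intro S
    rw [show {x : ℤ | 0 ≤ x ∧ x < N ∧ {l : Fin K | ∃ u, β l x u} = ↑S}
        = {x : ℤ | 0 ≤ x ∧ x < N ∧ T x = S} from by ext x; rw [Set.mem_setOf_eq,
          Set.mem_setOf_eq, hTset]]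
    exact hconv _ _
  constructor
  · rintro ⟨a, ha⟩
    choose f hf hfu using fun x => hpart x (a x)
    have hβiff : ∀ x l, β l x (a x) ↔ f x = l :=
      fun x l => ⟨fun h => (hfu x l h).symm, fun h => h ▸ hf x⟩
    have hfT : ∀ x, f x ∈ T x := by
      intro x; simp only [hT, Finset.mem_filter, Finset.mem_univ, true_and]
      exact ⟨a x, hf x⟩
    refine ⟨fun l S => ((I.filter (fun x => T x = S)).filter (fun x => f x = l)).card, ?_, ?_⟩
    · intro S
      rw [hconv2]
      apply Finset.card_eq_sum_card_fiberwise
      intro x hx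
      have := (Finset.mem_filter.mp hx).2
      exact this ▸ hfT x
    · intro l
      rw [← ha l, hconv _ _]
      have he : I.filter (fun x => β l x (a x)) = I.filter (fun x => f x = l) := by
        apply Finset.filter_congr
        intro x _
        exact (hβiff x l).trans (by tauto)
      rw [he]
      have := Finset.card_eq_sum_card_fiberwise
        (f := T) (s := I.filter (fun x => f x = l))
        (t := Finset.univ.filter (fun S : Finset (Fin K) => l ∈ S))
        (by
          intro x hx
          simp only [Finset.mem_coe, Finset.mem_filter, Finset.mem_univ, true_and]
          exact (Finset.mem_filter.mp hx).2 ▸ hfT x)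
      rw [this]
      apply Finset.sum_congr rfl
      intro S _
      congr 1
      simp only [Finset.filter_filter]
      apply Finset.filter_congr
      intro x _
      tauto
  · rintro ⟨w, hw1, hw2⟩
    have hw1' : ∀ S : Finset (Fin K),
        (I.filter (fun x => T x = S)).card = ∑ l ∈ S, w l S :=
      fun S => (hconv2 S).symm.trans (hw1 S)
    choose g hg1 hg2 using fun S => distribute S (I.filter (fun x => T x = S))
      (fun l => w l S) (hw1' S)
    set f : ℤ → Fin K := fun x => g (T x) x with hfdef
    have hfT : ∀ x ∈ I, f x ∈ T x := by
      intro x hx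
      exact hg1 (T x) x (Finset.mem_filter.mpr ⟨hx, rfl⟩)
    set a : ℤ → (Fin s → ℤ) := fun x =>
      if h : ∃ u, β (f x) x u then h.choose else fun _ => 0 with hadef
    have haβ : ∀ x ∈ I, β (f x) x (a x) := by
      intro x hx
      have hex : ∃ u, β (f x) x u := by
        have := hfT x hx
        simpa [hT] using this
      simp only [hadef, dif_pos hex]
      exact hex.choose_spec
    have hβiff : ∀ x ∈ I, ∀ l, β l x (a x) ↔ f x = l := by
      intro x hx l
      constructor
      · intro h
        exact ((hpart x (a x)).unique (haβ x hx) h)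
      · rintro rfl
        exact haβ x hx
    refine ⟨a, ?_⟩
    intro l
    rw [hconv _ _, hw2 l]
    have he : I.filter (fun x => β l x (a x)) = I.filter (fun x => f x = l) := by
      apply Finset.filter_congr
      intro x hx
      exact hβiff x hx l
    rw [he]
    have := Finset.card_eq_sum_card_fiberwise
      (f := T) (s := I.filter (fun x => f x = l))
      (t := Finset.univ.filter (fun S : Finset (Fin K) => l ∈ S))
      (by
        intro x hx
        simp only [Finset.mem_coe, Finset.mem_filter, Finset.mem_univ, true_and]
        obtain ⟨hxI, hfl⟩ := Finset.mem_filter.mp hx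
        exact hfl ▸ hfT x hxI)
    rw [this]
    apply Finset.sum_congr rfl
    intro S hS
    have hlS : l ∈ S := by simpa using hS
    rw [← hg2 S l hlS]
    congr 1
    simp only [Finset.filter_filter]
    apply Finset.filter_congr
    intro x _
    constructor
    · rintro ⟨hfl, hTS⟩
      refine ⟨hTS, ?_⟩
      show g S x = l
      rw [← hTS]
      exact hfl
    · rintro ⟨hTS, hgl⟩
      refine ⟨?_, hTS⟩
      show g (T x) x = l
      rw [hTS]
      exact hgl
end

section
/- Let m, K, s be natural numbers, N an integer with 0 ≤ N, w : Fin m → (Fin s → ℤ) a tuple of prescribed value vectors, β : Fin K → (Fin s → ℤ) → Prop a family of predicates on value tuples, and z : Fin K → ℕ. Then the following are equivalent: (A) there exist a function a : ℤ → (Fin s → ℤ) and an injective map y : Fin m → ℤ with 0 ≤ y j ∧ y j < N and a (y j) = w j for every j : Fin m, such that for every l : Fin K the cardinality of {x : ℤ | 0 ≤ x ∧ x < N ∧ β l (a x)} equals z l; (B) there exists a function a : ℤ → (Fin s → ℤ) such that for every value v in the range of w, the cardinality of {x : ℤ | 0 ≤ x ∧ x < N ∧ a x = v} is at least the number of indices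 j : Fin m with w j = v, and for every l : Fin K the cardinality of {x : ℤ | 0 ≤ x ∧ x < N ∧ β l (a x)} equals z l. -/
theorem stmt_3 (m K s : ℕ) (N : ℤ) (hN : 0 ≤ N)
    (w : Fin m → (Fin s → ℤ)) (β : Fin K → (Fin s → ℤ) → Prop) (z : Fin K → ℕ) :
    (∃ (a : ℤ → (Fin s → ℤ)) (y : Fin m → ℤ),
        Function.Injective y ∧
        (∀ j : Fin m, 0 ≤ y j ∧ y j < N ∧ a (y j) = w j) ∧
        (∀ l : Fin K, Set.ncard {x : ℤ | 0 ≤ x ∧ x < N ∧ β l (a x)} = z l)) ↔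
      (∃ a : ℤ → (Fin s → ℤ),
        (∀ v ∈ Set.range w,
            (Finset.univ.filter (fun j : Fin m => w j = v)).card ≤
              Set.ncard {x : ℤ | 0 ≤ x ∧ x < N ∧ a x = v}) ∧
        (∀ l : Fin K, Set.ncard {x : ℤ | 0 ≤ x ∧ x < N ∧ β l (a x)} = z l)) := by
  classical
  -- finset version of the value sets
  have hset : ∀ (a : ℤ → (Fin s → ℤ)) (v : Fin s → ℤ),
      {x : ℤ | 0 ≤ x ∧ x < N ∧ a x = v}
        = ↑((Finset.Ico (0:ℤ) N).filter (fun x => a x = v)) := by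
    intro a v
    ext x
    simp [Finset.mem_filter, Finset.mem_Ico, and_assoc]
  constructor
  · rintro ⟨a, y, hyinj, hy, hβ⟩
    refine ⟨a, ?_, hβ⟩
    rintro v ⟨j0, rfl⟩
    rw [hset, Set.ncard_coe_finset]
    apply Finset.card_le_card_of_injOn y
    · intro j hj
      simp only [Finset.mem_coe, Finset.mem_filter] at hj
      simp only [Finset.mem_coe, Finset.mem_filter, Finset.mem_Ico]
      exact ⟨⟨(hy j).1, (hy j).2.1⟩, by rw [(hy j).2.2, hj.2]⟩
    · exact hyinj.injOn
  · rintro ⟨a, hcard, hβ⟩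
    set F : (Fin s → ℤ) → Finset ℤ := fun v => (Finset.Ico (0:ℤ) N).filter (fun x => a x = v)
      with hF
    have hcard' : ∀ j : Fin m,
        (Finset.univ.filter (fun k : Fin m => w k = w j)).card ≤ (F (w j)).card := by
      intro j
      have := hcard (w j) ⟨j, rfl⟩
      rwa [hset, Set.ncard_coe_finset] at this
    set t : Fin m → Finset ℤ := fun j => F (w j) with ht
    have hall : ∀ S : Finset (Fin m), S.card ≤ (S.biUnion t).card := by
      intro S
      have h1 : S.biUnion t = (S.image w).biUnion F := by
        ext x; simp [ht]
      have h2 : ((S.image w).biUnion F).card = ∑ v ∈ S.image w, (F v).card := by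
        apply Finset.card_biUnion
        intro v _ v' _ hvv'
        simp only [Finset.disjoint_left, hF, Finset.mem_filter]
        rintro x ⟨_, rfl⟩ ⟨_, h⟩
        exact hvv' h
      have h3 : S.card = ∑ v ∈ S.image w, (S.filter (fun j => w j = v)).card :=
        Finset.card_eq_sum_card_image w S
      rw [h1, h2, h3]
      apply Finset.sum_le_sum
      intro v hv
      obtain ⟨j, hj, rfl⟩ := Finset.mem_image.mp hv
      calc (S.filter (fun k => w k = w j)).card
          ≤ (Finset.univ.filter (fun k : Fin m => w k = w j)).card :=
            Finset.card_le_card (Finset.filter_subset_filter _ (Finset.subset_univ S))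
        _ ≤ (F (w j)).card := hcard' j
    obtain ⟨y, hyinj, hy⟩ := (Finset.all_card_le_biUnion_card_iff_exists_injective t).mp hall
    refine ⟨a, y, hyinj, ?_, hβ⟩
    intro j
    have := hy j
    simp only [ht, hF, Finset.mem_filter, Finset.mem_Ico] at this
    exact ⟨this.1.1, this.1.2, this.2⟩
end

section
/- Let K, s be natural numbers, N an integer with 0 ≤ N, β : Fin K → (Fin s → ℤ) → Prop a family of predicates on value tuples, and z : Fin K → ℕ. Then the following are equivalent: (A) there exists a function a : ℤ → (Fin s → ℤ) such that for every l : Fin K, the cardinality of {x : ℤ | 0 ≤ x ∧ x < N ∧ β l (a x)} equals z l; (B) there exist a natural number h, value tuples u : Fin h → (Fin s → ℤ), and positive natural numbers v : Fin h → ℕ (∀ i, 0 < v i) such that the sum of the v i (as an integer) equals N and for every l : Fin K, z l equals the sum of v i over those i : Fin h with β l (u i). -/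
open scoped Classical

lemma key_blocks (s : ℕ) :
    ∀ (h : ℕ) (u : Fin h → (Fin s → ℤ)) (v : Fin h → ℕ),
      ∃ a : ℤ → (Fin s → ℤ), ∀ P : (Fin s → ℤ) → Prop,
        ((Finset.Ico (0:ℤ) (∑ i, (v i : ℤ))).filter (fun x => P (a x))).card
          = ∑ i ∈ Finset.univ.filter (fun i => P (u i)), v i := by
  intro h
  induction h with
  | zero =>
    intro u v
    exact ⟨fun _ => fun _ => 0, fun P => by simp⟩
  | succ h ih =>
    intro u v
    obtain ⟨a₀, ha₀⟩ := ih (fun i => u i.castSucc) (fun i => v i.castSucc)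
    set n : ℤ := ∑ i : Fin h, ((v i.castSucc : ℕ) : ℤ) with hn
    have hn0 : 0 ≤ n := Finset.sum_nonneg fun i _ => Int.ofNat_nonneg _
    refine ⟨fun x => if x < n then a₀ x else u (Fin.last h), fun P => ?_⟩
    have hsum : (∑ i : Fin (h+1), (v i : ℤ)) = n + (v (Fin.last h) : ℤ) := by
      rw [Fin.sum_univ_castSucc]
    rw [hsum]
    have hle : n ≤ n + (v (Fin.last h) : ℤ) :=
      le_add_of_nonneg_right (Int.ofNat_nonneg _)
    have hunion : Finset.Ico (0:ℤ) (n + (v (Fin.last h) : ℤ))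
        = Finset.Ico (0:ℤ) n ∪ Finset.Ico n (n + (v (Fin.last h) : ℤ)) :=
      (Finset.Ico_union_Ico_eq_Ico hn0 hle).symm
    rw [hunion, Finset.filter_union, Finset.card_union_of_disjoint
      (Finset.disjoint_filter_filter (Finset.Ico_disjoint_Ico_consecutive 0 n _))]
    have h1 : (Finset.Ico (0:ℤ) n).filter
          (fun x => P (if x < n then a₀ x else u (Fin.last h)))
        = (Finset.Ico (0:ℤ) n).filter (fun x => P (a₀ x)) :=
      Finset.filter_congr (fun x hx => by
        rw [if_pos (Finset.mem_Ico.mp hx).2])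
    have h2 : (Finset.Ico n (n + (v (Fin.last h) : ℤ))).filter
          (fun x => P (if x < n then a₀ x else u (Fin.last h)))
        = (Finset.Ico n (n + (v (Fin.last h) : ℤ))).filter
          (fun _ => P (u (Fin.last h))) :=
      Finset.filter_congr (fun x hx => by
        rw [if_neg (not_lt.mpr (Finset.mem_Ico.mp hx).1)])
    rw [h1, h2, ha₀ P]
    have hcard2 : ((Finset.Ico n (n + (v (Fin.last h) : ℤ))).filter
          (fun _ => P (u (Fin.last h)))).card
        = if P (u (Fin.last h)) then v (Fin.last h) else 0 := by
      by_cases hP : P (u (Fin.last h))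
      · simp [hP, Int.toNat_natCast]
      · simp [hP]
    rw [hcard2, Finset.sum_filter, Finset.sum_filter, Fin.sum_univ_castSucc]

theorem stmt_4 (K s : ℕ) (N : ℤ) (hN : 0 ≤ N)
    (β : Fin K → (Fin s → ℤ) → Prop) (z : Fin K → ℕ) :
    (∃ a : ℤ → (Fin s → ℤ),
        ∀ l : Fin K, Set.ncard {x : ℤ | 0 ≤ x ∧ x < N ∧ β l (a x)} = z l) ↔
      (∃ (h : ℕ) (u : Fin h → (Fin s → ℤ)) (v : Fin h → ℕ),
        (∀ i : Fin h, 0 < v i) ∧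
        (∑ i : Fin h, (v i : ℤ)) = N ∧
        (∀ l : Fin K, z l = ∑ i ∈ Finset.univ.filter (fun i : Fin h => β l (u i)), v i)) := by
  have setfin : ∀ (a : ℤ → (Fin s → ℤ)) (l : Fin K),
      {x : ℤ | 0 ≤ x ∧ x < N ∧ β l (a x)}
        = ↑((Finset.Ico (0:ℤ) N).filter (fun x => β l (a x))) := by
    intro a l
    ext x
    simp [Finset.mem_Ico, and_assoc]
  constructor
  · rintro ⟨a, ha⟩
    refine ⟨N.toNat, fun i => a (i : ℤ), fun _ => 1, fun _ => one_pos, by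
      simp [Int.toNat_of_nonneg hN], fun l => ?_⟩
    rw [← ha l, setfin a l, Set.ncard_coe_finset]
    rw [Finset.sum_const, smul_eq_mul, mul_one]
    refine Finset.card_bij' (i := fun x hx => (⟨x.toNat, ?_⟩ : Fin N.toNat))
      (j := fun i _ => (i : ℤ)) ?_ ?_ ?_ ?_
    · obtain ⟨hx1, -⟩ := Finset.mem_filter.mp hx
      obtain ⟨h0, h1⟩ := Finset.mem_Ico.mp hx1
      omega
    · intro x hx
      obtain ⟨hx1, hx2⟩ := Finset.mem_filter.mp hx
      obtain ⟨h0, h1⟩ := Finset.mem_Ico.mp hx1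
      simp only [Finset.mem_filter, Finset.mem_univ, true_and]
      simpa [Int.toNat_of_nonneg h0] using hx2
    · intro i hi
      obtain ⟨-, hi2⟩ := Finset.mem_filter.mp hi
      refine Finset.mem_filter.mpr ⟨Finset.mem_Ico.mpr ⟨Int.ofNat_nonneg _, ?_⟩, hi2⟩
      show ((i : ℕ) : ℤ) < N
      have := i.isLt
      omega
    · intro x hx
      obtain ⟨hx1, -⟩ := Finset.mem_filter.mp hx
      obtain ⟨h0, -⟩ := Finset.mem_Ico.mp hx1
      simp [Int.toNat_of_nonneg h0]
    · intro i hi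
      simp
  · rintro ⟨h, u, v, hv, hsum, hz⟩
    obtain ⟨a, ha⟩ := key_blocks s h u v
    refine ⟨a, fun l => ?_⟩
    rw [setfin a l, Set.ncard_coe_finset, ← hsum, ha (β l), ← hz l]
end
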